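/- For every ζ₀ ∈ 𝔻 there exists a linear functional Λ : H²(𝔻) → ℂ which is not continuous, satisfies Λ(k_w) = (1 − ζ₀\overline{w})^{-1} and Λ(1 − \overline{w}·id) = 1 − \overline{w}ζ₀ for all w ∈ 𝔻 (in particular Λ(1) = 1 and Λ(1/k_w) · Λ(k_w) = 1 for every w ∈ 𝔻), and which is not multiplicative. -/

import Mathlib

open scoped BigOperators ComplexConjugate

noncomputable section

/-- The Hardy space `H²(𝔻)`, concretely realized as the space of square-summable
Taylor-coefficient sequences. -/
abbrev H2 : Type := lp (fun _ : ℕ => ℂ) 2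

/-- Evaluation of an element of `H²(𝔻)` (given by its coefficient sequence) at a point:
`f(z) = Σ_n a_n zⁿ`. -/
def evalH2 (f : H2) (z : ℂ) : ℂ := ∑' n : ℕ, f n * z ^ n

/-- A functional `Λ` on `H²(𝔻)` is multiplicative if `Λ(fg) = Λ(f)Λ(g)` whenever `f`, `g`
and an element `h` representing the pointwise product `fg` on `𝔻` all lie in `H²(𝔻)`. -/
def MultH2 (Λ : H2 → ℂ) : Prop :=
  ∀ f g h : H2, (∀ z : ℂ, ‖z‖ < 1 → evalH2 h z = evalH2 f z * evalH2 g z) →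
    Λ h = Λ f * Λ g

open scoped ENNReal

namespace Stmt12

open Polynomial Finset

/-- the forward shift on sequences -/
def T : (ℕ → ℂ) →ₗ[ℂ] (ℕ → ℂ) where
  toFun a n := a (n + 1)
  map_add' _ _ := rfl
  map_smul' _ _ := rfl

lemma T_apply (a : ℕ → ℂ) (n : ℕ) : T a n = a (n + 1) := rfl

lemma T_pow_apply (j : ℕ) (a : ℕ → ℂ) (n : ℕ) : (T ^ j) a n = a (n + j) := by
  induction j generalizing a n with
  | zero => rfl
  | succ j ih =>
      rw [pow_succ, Module.End.mul_apply, ih]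
      rfl

lemma aeval_apply (p : ℂ[X]) (a : ℕ → ℂ) (n : ℕ) :
    Polynomial.aeval T p a n = ∑ j ∈ range (p.natDegree + 1), p.coeff j * a (n + j) := by
  rw [Polynomial.aeval_eq_sum_range, LinearMap.sum_apply, Finset.sum_apply]
  exact Finset.sum_congr rfl fun j _ => by
    rw [LinearMap.smul_apply, Pi.smul_apply, T_pow_apply, smul_eq_mul]

/-- satisfies an eventual linear recurrence -/
def RecP (a : ℕ → ℂ) : Prop :=
  ∃ p : ℂ[X], p ≠ 0 ∧ ∃ N, ∀ n ≥ N, Polynomial.aeval T p a n = 0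

lemma ev0 {a : ℕ → ℂ} {N : ℕ} (h : ∀ n ≥ N, a n = 0) (p : ℂ[X]) :
    ∀ n ≥ N, Polynomial.aeval T p a n = 0 := by
  intro n hn
  rw [aeval_apply]
  exact Finset.sum_eq_zero fun j _ => by
    rw [h (n + j) (le_trans hn (Nat.le_add_right _ _)), mul_zero]

lemma recP_zero : RecP 0 := ⟨1, one_ne_zero, 0, fun n _ => by simp⟩

lemma recP_add {a b : ℕ → ℂ} (ha : RecP a) (hb : RecP b) : RecP (a + b) := by
  obtain ⟨p, hp, N, hN⟩ := ha
  obtain ⟨q, hq, M, hM⟩ := hb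
  refine ⟨p * q, mul_ne_zero hp hq, max N M, fun n hn => ?_⟩
  have h1 : Polynomial.aeval T (p * q) a n = 0 := by
    have e : Polynomial.aeval T (p * q) a = Polynomial.aeval T q (Polynomial.aeval T p a) := by
      rw [mul_comm, map_mul, Module.End.mul_apply]
    rw [e]
    exact ev0 hN q n (le_of_max_le_left hn)
  have h2 : Polynomial.aeval T (p * q) b n = 0 := by
    have e : Polynomial.aeval T (p * q) b = Polynomial.aeval T p (Polynomial.aeval T q b) := by
      rw [map_mul, Module.End.mul_apply]
    rw [e]
    exact ev0 hM p n (le_of_max_le_right hn)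
  rw [map_add, Pi.add_apply, h1, h2, add_zero]

lemma recP_smul (c : ℂ) {a : ℕ → ℂ} (ha : RecP a) : RecP (c • a) := by
  obtain ⟨p, hp, N, hN⟩ := ha
  exact ⟨p, hp, N, fun n hn => by rw [map_smul, Pi.smul_apply, hN n hn, smul_zero]⟩

/-- the subspace of `H2` of sequences satisfying an eventual linear recurrence -/
def RecS : Submodule ℂ H2 where
  carrier := {x : H2 | RecP ⇑x}
  add_mem' := fun {x y} hx hy => by
    show RecP ⇑(x + y); rw [lp.coeFn_add]; exact recP_add hx hy
  zero_mem' := by show RecP ⇑(0 : H2); rw [lp.coeFn_zero]; exact recP_zero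
  smul_mem' := fun c x hx => by
    show RecP ⇑(c • x); rw [lp.coeFn_smul]; exact recP_smul c hx

def fSeq : ℕ → ℂ := fun n => ((n.factorial : ℂ))⁻¹

def BSeq : ℕ → ℂ := fun n => match n with
  | 0 => 0
  | Nat.succ m => fSeq m

lemma norm_fSeq (n : ℕ) : ‖fSeq n‖ = ((n.factorial : ℝ))⁻¹ := by
  simp [fSeq]

lemma summable_inv_factorial : Summable fun n : ℕ => ((n.factorial : ℝ))⁻¹ := by
  simpa using Real.summable_pow_div_factorial 1

lemma sq_norm_fSeq_le (n : ℕ) : ‖fSeq n‖ ^ 2 ≤ ((n.factorial : ℝ))⁻¹ := by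
  rw [norm_fSeq]
  have h1 : (1 : ℝ) ≤ (n.factorial : ℝ) := by exact_mod_cast n.factorial_pos
  have h2 : ((n.factorial : ℝ))⁻¹ ≤ 1 := inv_le_one_of_one_le₀ h1
  have h3 : (0 : ℝ) ≤ ((n.factorial : ℝ))⁻¹ := by positivity
  nlinarith

lemma rpow_two_eq (x : ℝ) : x ^ (2 : ℝ≥0∞).toReal = x ^ 2 := by
  rw [show ((2 : ℝ≥0∞)).toReal = ((2 : ℕ) : ℝ) by simp, Real.rpow_natCast]

lemma memf : Memℓp fSeq 2 := by
  apply memℓp_gen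
  have : (fun n : ℕ => ‖fSeq n‖ ^ (2 : ℝ≥0∞).toReal) = fun n => ‖fSeq n‖ ^ 2 :=
    funext fun n => rpow_two_eq _
  rw [this]
  exact Summable.of_nonneg_of_le (fun n => by positivity) sq_norm_fSeq_le summable_inv_factorial

lemma memB : Memℓp BSeq 2 := by
  apply memℓp_gen
  have e : (fun n : ℕ => ‖BSeq n‖ ^ (2 : ℝ≥0∞).toReal) = fun n => ‖BSeq n‖ ^ 2 :=
    funext fun n => rpow_two_eq _
  rw [e]
  rw [← summable_nat_add_iff 1]
  have e2 : (fun n : ℕ => ‖BSeq (n + 1)‖ ^ 2) = fun n => ‖fSeq n‖ ^ 2 := rfl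
  rw [e2]
  exact Summable.of_nonneg_of_le (fun n => by positivity) sq_norm_fSeq_le summable_inv_factorial

def fH2 : H2 := ⟨fSeq, memf⟩
def BfH2 : H2 := ⟨BSeq, memB⟩
def e1H2 : H2 := lp.single 2 1 1

lemma summable_eval {z : ℂ} (hz : ‖z‖ < 1) (x : H2) : Summable fun n => x n * z ^ n := by
  apply Summable.of_norm_bounded (g := fun n => ‖x‖ * ‖z‖ ^ n)
    ((summable_geometric_of_lt_one (norm_nonneg z) hz).mul_left ‖x‖)
  intro n
  rw [norm_mul, norm_pow]
  exact mul_le_mul_of_nonneg_right (lp.norm_apply_le_norm two_ne_zero x n) (by positivity)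

def Eval (z : ℂ) (hz : ‖z‖ < 1) : H2 →ₗ[ℂ] ℂ where
  toFun x := evalH2 x z
  map_add' x y := by
    unfold evalH2
    rw [← Summable.tsum_add (summable_eval hz x) (summable_eval hz y)]
    apply tsum_congr
    intro n
    rw [lp.coeFn_add, Pi.add_apply]
    ring
  map_smul' c x := by
    unfold evalH2
    simp only [lp.coeFn_smul, Pi.smul_apply, smul_eq_mul, RingHom.id_apply]
    rw [← tsum_mul_left]
    apply tsum_congr
    intro n
    ring

lemma aeval_X_mul (q : ℂ[X]) (a : ℕ → ℂ) (n : ℕ) :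
    Polynomial.aeval T (X * q) a n = Polynomial.aeval T q a (n + 1) := by
  rw [map_mul, Polynomial.aeval_X, Module.End.mul_apply]
  rfl

lemma rec_norm {a : ℕ → ℂ} (h : RecP a) :
    ∃ q : ℂ[X], q.coeff 0 ≠ 0 ∧ ∃ N, ∀ n ≥ N, Polynomial.aeval T q a n = 0 := by
  obtain ⟨p, hp, N, hN⟩ := h
  have key : ∀ d : ℕ, ∀ p : ℂ[X], p.natDegree ≤ d → p ≠ 0 →
      (∃ N, ∀ n ≥ N, Polynomial.aeval T p a n = 0) →
      ∃ q : ℂ[X], q.coeff 0 ≠ 0 ∧ ∃ N, ∀ n ≥ N, Polynomial.aeval T q a n = 0 := by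
    intro d
    induction d with
    | zero =>
        rintro p hd hp ⟨N, hN⟩
        refine ⟨p, ?_, N, hN⟩
        intro h0
        apply hp
        rw [Polynomial.eq_C_of_natDegree_le_zero hd, h0, map_zero]
    | succ d ih =>
        rintro p hd hp ⟨N, hN⟩
        by_cases h0 : p.coeff 0 ≠ 0
        · exact ⟨p, h0, N, hN⟩
        push_neg at h0
        have hX : X * p.divX = p := by
          have h1 := p.divX_mul_X_add
          rw [h0, Polynomial.C_0, add_zero, mul_comm] at h1
          exact h1
        have hq : p.divX ≠ 0 := fun h => hp (by rw [← hX, h, mul_zero])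
        have hdeg : p.divX.natDegree ≤ d := by
          have h2 := Polynomial.natDegree_divX_eq_natDegree_tsub_one (p := p)
          omega
        apply ih p.divX hdeg hq
        refine ⟨N + 1, fun n hn => ?_⟩
        have h3 := hN (n - 1) (by omega)
        rw [← hX, aeval_X_mul] at h3
        have hn1 : n - 1 + 1 = n := by omega
        rwa [hn1] at h3
  exact key p.natDegree p le_rfl hp ⟨N, hN⟩

lemma fact_bound (n i : ℕ) :
    (((n + (i + 1)).factorial : ℝ))⁻¹ ≤ ((n.factorial : ℝ))⁻¹ * (((n : ℝ) + 1))⁻¹ := by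
  rw [← mul_inv]
  have hle : (n.factorial : ℝ) * ((n : ℝ) + 1) ≤ (((n + (i + 1)).factorial : ℝ)) := by
    have h1 : (n + 1).factorial ≤ (n + (i + 1)).factorial := Nat.factorial_le (by omega)
    have h2 : ((n + 1).factorial : ℝ) = (n.factorial : ℝ) * ((n : ℝ) + 1) := by
      rw [Nat.factorial_succ]
      push_cast
      ring
    rw [← h2]
    exact_mod_cast h1
  have hpos : (0 : ℝ) < (n.factorial : ℝ) * ((n : ℝ) + 1) := by positivity
  exact inv_anti₀ hpos hle

lemma not_recP_fSeq : ¬ RecP fSeq := by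
  intro h
  obtain ⟨q, h0, N, hN⟩ := rec_norm h
  set D := q.natDegree with hD
  set Cc := ∑ i ∈ range D, ‖q.coeff (i + 1)‖ with hCc
  have key : ∀ n, N ≤ n → ‖q.coeff 0‖ * ((n : ℝ) + 1) ≤ Cc := by
    intro n hn
    have h1 := hN n hn
    rw [aeval_apply, Finset.sum_range_succ'] at h1
    have h2 : q.coeff 0 * fSeq n = -∑ i ∈ range D, q.coeff (i + 1) * fSeq (n + (i + 1)) := by
      have hn0 : n + 0 = n := rfl
      rw [hn0] at h1
      linear_combination h1
    have h3 : ‖q.coeff 0‖ * ((n.factorial : ℝ))⁻¹ ≤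
        Cc * (((n.factorial : ℝ))⁻¹ * (((n : ℝ) + 1))⁻¹) := by
      calc ‖q.coeff 0‖ * ((n.factorial : ℝ))⁻¹ = ‖q.coeff 0 * fSeq n‖ := by
            rw [norm_mul, norm_fSeq]
        _ = ‖∑ i ∈ range D, q.coeff (i + 1) * fSeq (n + (i + 1))‖ := by rw [h2, norm_neg]
        _ ≤ ∑ i ∈ range D, ‖q.coeff (i + 1) * fSeq (n + (i + 1))‖ := norm_sum_le _ _
        _ ≤ ∑ i ∈ range D, ‖q.coeff (i + 1)‖ * (((n.factorial : ℝ))⁻¹ * (((n : ℝ) + 1))⁻¹) := by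
            apply Finset.sum_le_sum
            intro i _
            rw [norm_mul, norm_fSeq]
            exact mul_le_mul_of_nonneg_left (fact_bound n i) (norm_nonneg _)
        _ = Cc * (((n.factorial : ℝ))⁻¹ * (((n : ℝ) + 1))⁻¹) := by rw [← Finset.sum_mul]
    have hfpos : (0 : ℝ) < ((n.factorial : ℝ))⁻¹ := by positivity
    have hnpos : (0 : ℝ) < (n : ℝ) + 1 := by positivity
    have h4 : ‖q.coeff 0‖ ≤ Cc * (((n : ℝ) + 1))⁻¹ := by
      have := h3
      rw [show Cc * (((n.factorial : ℝ))⁻¹ * (((n : ℝ) + 1))⁻¹)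
          = (Cc * (((n : ℝ) + 1))⁻¹) * ((n.factorial : ℝ))⁻¹ by ring] at this
      exact le_of_mul_le_mul_right this hfpos
    calc ‖q.coeff 0‖ * ((n : ℝ) + 1) ≤ (Cc * (((n : ℝ) + 1))⁻¹) * ((n : ℝ) + 1) :=
          mul_le_mul_of_nonneg_right h4 (le_of_lt hnpos)
      _ = Cc := by field_simp
  have hq0 : 0 < ‖q.coeff 0‖ := norm_pos_iff.mpr h0
  obtain ⟨m, hm⟩ := exists_nat_gt (Cc / ‖q.coeff 0‖)
  have hkey := key (max m N) (le_max_right _ _)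
  have hmle : (m : ℝ) ≤ ((max m N : ℕ) : ℝ) := by exact_mod_cast le_max_left m N
  have hbig : Cc / ‖q.coeff 0‖ < ((max m N : ℕ) : ℝ) + 1 := by linarith
  rw [div_lt_iff₀ hq0] at hbig
  nlinarith

lemma bseq_not_mem (s : ℕ → ℂ) (c : ℂ) (hs : RecP s) (heq : BSeq = s + c • fSeq) : False := by
  obtain ⟨q, h0, N, hN⟩ := rec_norm hs
  have hsq : s = BSeq - c • fSeq := by rw [heq]; abel
  rw [hsq] at hN
  have hTB : T BSeq = fSeq := funext fun n => rfl
  have hXq : X * q.divX + C (q.coeff 0) = q := by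
    have h1 := q.divX_mul_X_add
    rw [mul_comm] at h1
    exact h1
  set P : ℂ[X] := X * q.divX + C (q.coeff 0) - C c * (X * q) with hP
  have hP0 : P.coeff 0 = q.coeff 0 := by
    simp [hP, Polynomial.coeff_sub, Polynomial.coeff_add, Polynomial.mul_coeff_zero,
      Polynomial.coeff_X_zero]
  have hPne : P ≠ 0 := fun h => h0 (by rw [← hP0, h, Polynomial.coeff_zero])
  apply not_recP_fSeq
  -- expand aeval q (BSeq - c • fSeq) n = 0
  have e1 : Polynomial.aeval T q (BSeq - c • fSeq) =
      Polynomial.aeval T q BSeq - c • Polynomial.aeval T q fSeq := by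
    rw [map_sub, map_smul]
  have e2 : ∀ m, Polynomial.aeval T q BSeq m
      = Polynomial.aeval T q.divX fSeq m + q.coeff 0 * BSeq m := by
    intro m
    conv_lhs => rw [← hXq]
    rw [mul_comm X q.divX, map_add, map_mul, Polynomial.aeval_X, Polynomial.aeval_C,
      LinearMap.add_apply, Module.End.mul_apply, hTB, Module.algebraMap_end_apply,
      Pi.add_apply, Pi.smul_apply, smul_eq_mul]
  refine ⟨P, hPne, N, fun n hn => ?_⟩
  have exp1 : Polynomial.aeval T P fSeq n
      = Polynomial.aeval T q.divX fSeq (n + 1) + q.coeff 0 * fSeq n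
        - c * Polynomial.aeval T q fSeq (n + 1) := by
    rw [hP]
    simp only [map_sub, map_add, map_mul, LinearMap.sub_apply, LinearMap.add_apply,
      Module.End.mul_apply, Pi.sub_apply, Pi.add_apply, Polynomial.aeval_C,
      Polynomial.aeval_X, Module.algebraMap_end_apply, Pi.smul_apply, smul_eq_mul,
      T_apply]
  have hb := hN (n + 1) (by omega)
  rw [e1, Pi.sub_apply, Pi.smul_apply, smul_eq_mul, e2 (n + 1),
    show BSeq (n + 1) = fSeq n from rfl] at hb
  rw [exp1]
  linear_combination hb

lemma recP_of_geom (w : ℂ) (a : ℕ → ℂ) (ha : ∀ n, a n = (conj w) ^ n) : RecP a := by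
  refine ⟨X - C (conj w), Polynomial.X_sub_C_ne_zero _, 0, fun n _ => ?_⟩
  rw [map_sub, Polynomial.aeval_X, Polynomial.aeval_C, LinearMap.sub_apply, Pi.sub_apply,
    Module.algebraMap_end_apply, Pi.smul_apply, smul_eq_mul, T_apply, ha, ha]
  ring

lemma recP_of_ev0 (a : ℕ → ℂ) (N : ℕ) (ha : ∀ n ≥ N, a n = 0) : RecP a := by
  refine ⟨X, Polynomial.X_ne_zero, N, fun n hn => ?_⟩
  rw [Polynomial.aeval_X, T_apply]
  exact ha (n + 1) (by omega)

end Stmt12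

/-- for every `ζ₀ ∈ 𝔻` there is a *discontinuous* linear functional `Λ` on
`H²(𝔻)` with `Λ(k_w) = (1 - ζ₀ conj w)⁻¹` and `Λ(1 - conj w · id) = 1 - conj w ζ₀` for all
`w ∈ 𝔻` (in particular `Λ(1) = 1` and `Λ(1/k_w)·Λ(k_w) = 1`), which is not multiplicative.
Here `k_w` has coefficient sequence `n ↦ conj w ^ n` and `1 - conj w · id` has coefficient
sequence `(1, -conj w, 0, 0, …)`. -/
theorem stmt12 (ζ₀ : ℂ) (hζ₀ : ‖ζ₀‖ < 1) :
    ∃ Λ : H2 →ₗ[ℂ] ℂ,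
      ¬ Continuous Λ ∧
      (∀ w : ℂ, ‖w‖ < 1 → ∀ kw : H2, (∀ n : ℕ, kw n = conj w ^ n) →
        Λ kw = (1 - ζ₀ * conj w)⁻¹) ∧
      (∀ w : ℂ, ‖w‖ < 1 → ∀ φw : H2,
        (∀ n : ℕ, φw n = if n = 0 then 1 else if n = 1 then -conj w else 0) →
        Λ φw = 1 - conj w * ζ₀) ∧
      (∀ one : H2, (∀ n : ℕ, one n = if n = 0 then 1 else 0) → Λ one = 1) ∧
      (∀ w : ℂ, ‖w‖ < 1 → ∀ kw φw : H2, (∀ n : ℕ, kw n = conj w ^ n) →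
        (∀ n : ℕ, φw n = if n = 0 then 1 else if n = 1 then -conj w else 0) →
        Λ φw * Λ kw = 1) ∧
      ¬ MultH2 Λ := by
  classical
  set E : H2 →ₗ[ℂ] ℂ := Stmt12.Eval ζ₀ hζ₀ with hE
  set U : Submodule ℂ H2 := Stmt12.RecS ⊔ (ℂ ∙ Stmt12.fH2) with hU
  have hBfU : Stmt12.BfH2 ∉ U := by
    intro hmem
    rw [hU, Submodule.mem_sup] at hmem
    obtain ⟨y, hy, z, hz, hyz⟩ := hmem
    rw [Submodule.mem_span_singleton] at hz
    obtain ⟨c, rfl⟩ := hz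
    refine Stmt12.bseq_not_mem ⇑y c hy ?_
    have h1 : (Stmt12.BfH2 : ℕ → ℂ) = ⇑y + c • ⇑Stmt12.fH2 := by
      rw [← hyz, lp.coeFn_add, lp.coeFn_smul]
    exact h1
  obtain ⟨δ, hδ⟩ :=
    (LinearPMap.supSpanSingleton (⟨U, 0⟩ : H2 →ₗ.[ℂ] ℂ) Stmt12.BfH2 1 hBfU).toFun.exists_extend
  have hδU : ∀ x ∈ U, δ x = 0 := by
    intro x hx
    have h1 := LinearPMap.supSpanSingleton_apply_mk (⟨U, 0⟩ : H2 →ₗ.[ℂ] ℂ)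
      Stmt12.BfH2 1 hBfU x hx 0
    have h2 : δ (x + (0 : ℂ) • Stmt12.BfH2) = _ := (LinearMap.congr_fun hδ _).trans h1
    simpa using h2
  have hδBf : δ Stmt12.BfH2 = 1 := by
    have h1 := LinearPMap.supSpanSingleton_apply_mk (⟨U, 0⟩ : H2 →ₗ.[ℂ] ℂ)
      Stmt12.BfH2 1 hBfU 0 U.zero_mem 1
    have h2 : δ (0 + (1 : ℂ) • Stmt12.BfH2) = _ := (LinearMap.congr_fun hδ _).trans h1
    simpa using h2
  have hadd : ∀ x : H2, (E + δ) x = evalH2 x ζ₀ + δ x := fun x => rfl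
  have hzw : ∀ w : ℂ, ‖w‖ < 1 → ‖ζ₀ * conj w‖ < 1 := by
    intro w hw
    rw [norm_mul]
    have hcw : ‖(conj w : ℂ)‖ = ‖w‖ := by simp
    rw [hcw]
    nlinarith [norm_nonneg ζ₀, norm_nonneg w]
  have hKW : ∀ w : ℂ, ‖w‖ < 1 → ∀ kw : H2, (∀ n : ℕ, kw n = conj w ^ n) →
      (E + δ) kw = (1 - ζ₀ * conj w)⁻¹ := by
    intro w hw kw hkw
    have hδk : δ kw = 0 := hδU kw (Submodule.mem_sup_left (Stmt12.recP_of_geom w ⇑kw hkw))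
    rw [hadd kw, hδk, add_zero]
    unfold evalH2
    calc ∑' n : ℕ, kw n * ζ₀ ^ n = ∑' n : ℕ, (ζ₀ * conj w) ^ n :=
        tsum_congr fun n => by rw [hkw n, mul_pow]; ring
      _ = (1 - ζ₀ * conj w)⁻¹ := tsum_geometric_of_norm_lt_one (hzw w hw)
  have hPhi : ∀ w : ℂ, ‖w‖ < 1 → ∀ φw : H2,
      (∀ n : ℕ, φw n = if n = 0 then 1 else if n = 1 then -conj w else 0) →
      (E + δ) φw = 1 - conj w * ζ₀ := by
    intro w hw φw hφ
    have hδφ : δ φw = 0 := hδU φw (Submodule.mem_sup_left (Stmt12.recP_of_ev0 ⇑φw 2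
      (fun n hn => by rw [hφ n, if_neg (by omega), if_neg (by omega)])))
    rw [hadd, hδφ, add_zero]
    unfold evalH2
    rw [tsum_eq_sum (s := ({0, 1} : Finset ℕ)) ?_]
    · rw [Finset.sum_pair (by norm_num : (0 : ℕ) ≠ 1), hφ 0, hφ 1]
      norm_num
      ring
    · intro b hb
      have hb0 : b ≠ 0 := fun h => hb (by simp [h])
      have hb1 : b ≠ 1 := fun h => hb (by simp [h])
      rw [hφ b, if_neg hb0, if_neg hb1, zero_mul]
  have hOne : ∀ one : H2, (∀ n : ℕ, one n = if n = 0 then 1 else 0) → (E + δ) one = 1 := by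
    intro one hone
    have hδ1 : δ one = 0 := hδU one (Submodule.mem_sup_left (Stmt12.recP_of_ev0 ⇑one 1
      (fun n hn => by rw [hone n, if_neg (by omega)])))
    rw [hadd, hδ1, add_zero]
    unfold evalH2
    rw [tsum_eq_single 0 (fun b hb => by rw [hone b, if_neg hb, zero_mul])]
    rw [hone 0, if_pos rfl, pow_zero, mul_one]
  have hProd : ∀ w : ℂ, ‖w‖ < 1 → ∀ kw φw : H2, (∀ n : ℕ, kw n = conj w ^ n) →
      (∀ n : ℕ, φw n = if n = 0 then 1 else if n = 1 then -conj w else 0) →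
      (E + δ) φw * (E + δ) kw = 1 := by
    intro w hw kw φw hkw hφ
    rw [hPhi w hw φw hφ, hKW w hw kw hkw]
    have hne : (1 : ℂ) - ζ₀ * conj w ≠ 0 := by
      intro h
      rw [sub_eq_zero] at h
      have := hzw w hw
      rw [← h] at this
      simp at this
    rw [show (1 : ℂ) - conj w * ζ₀ = 1 - ζ₀ * conj w by ring, mul_inv_cancel₀ hne]
  have hSingle : ∀ (i : ℕ) (a : ℂ), δ (lp.single 2 i a) = 0 := by
    intro i a
    apply hδU
    apply Submodule.mem_sup_left
    apply Stmt12.recP_of_ev0 _ (i + 1)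
    intro n hn
    exact lp.single_apply_ne (E := fun _ : ℕ => ℂ) 2 i a (show n ≠ i by omega)
  have hEvalSingle : ∀ (i : ℕ) (a : ℂ), evalH2 (lp.single 2 i a) ζ₀ = a * ζ₀ ^ i := by
    intro i a
    unfold evalH2
    rw [tsum_eq_single i (fun b hb => by
      have h := lp.single_apply_ne (E := fun _ : ℕ => ℂ) 2 i a hb
      rw [h, zero_mul])]
    have h := lp.single_apply_self (E := fun _ : ℕ => ℂ) 2 i a
    rw [h]
  have hshift : ∀ z : ℂ, ‖z‖ < 1 → evalH2 Stmt12.BfH2 z = z * evalH2 Stmt12.fH2 z := by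
    intro z hz
    unfold evalH2
    rw [Summable.tsum_eq_zero_add (Stmt12.summable_eval hz Stmt12.BfH2)]
    rw [show (Stmt12.BfH2 : ℕ → ℂ) 0 = 0 from rfl, zero_mul, zero_add]
    rw [← tsum_mul_left]
    exact tsum_congr fun n => by
      show Stmt12.fSeq n * z ^ (n + 1) = z * (Stmt12.fSeq n * z ^ n)
      ring
  have hdisc : ¬ Continuous ⇑(E + δ) := by
    intro hcont
    let Λ' : H2 →L[ℂ] ℂ := ⟨E + δ, hcont⟩
    have hsum := lp.hasSum_single (E := fun _ : ℕ => ℂ) (p := 2) (by norm_num) Stmt12.BfH2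
    have h1 : HasSum (fun n => Λ' (lp.single 2 n (Stmt12.BfH2 n))) (Λ' Stmt12.BfH2) :=
      hsum.mapL Λ'
    have h2 : (fun n => Λ' (lp.single 2 n (Stmt12.BfH2 n)))
        = fun n => Stmt12.BfH2 n * ζ₀ ^ n := by
      funext n
      show (E + δ) (lp.single 2 n (Stmt12.BfH2 n)) = _
      rw [hadd, hSingle, add_zero, hEvalSingle]
    rw [h2] at h1
    have h3 : HasSum (fun n : ℕ => Stmt12.BfH2 n * ζ₀ ^ n) (evalH2 Stmt12.BfH2 ζ₀) := by
      unfold evalH2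
      exact (Stmt12.summable_eval hζ₀ Stmt12.BfH2).hasSum
    have h4 : Λ' Stmt12.BfH2 = evalH2 Stmt12.BfH2 ζ₀ := h1.unique h3
    have h5 : Λ' Stmt12.BfH2 = evalH2 Stmt12.BfH2 ζ₀ + 1 := by
      show (E + δ) Stmt12.BfH2 = _
      rw [hadd, hδBf]
    rw [h4] at h5
    exact one_ne_zero (left_eq_add.mp h5)
  have hNotMult : ¬ MultH2 ⇑(E + δ) := by
    intro hM
    have hpt : ∀ z : ℂ, ‖z‖ < 1 →
        evalH2 Stmt12.BfH2 z = evalH2 Stmt12.fH2 z * evalH2 Stmt12.e1H2 z := by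
      intro z hz
      have he1 : evalH2 Stmt12.e1H2 z = z := by
        unfold evalH2
        rw [tsum_eq_single 1 (fun b hb => by
          have h : (Stmt12.e1H2 : ℕ → ℂ) b = 0 :=
            lp.single_apply_ne (E := fun _ : ℕ => ℂ) 2 1 1 hb
          rw [h, zero_mul])]
        have h : (Stmt12.e1H2 : ℕ → ℂ) 1 = 1 :=
          lp.single_apply_self (E := fun _ : ℕ => ℂ) 2 1 1
        rw [h, pow_one, one_mul]
      rw [hshift z hz, he1]
      ring
    have hM' := hM Stmt12.fH2 Stmt12.e1H2 Stmt12.BfH2 hpt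
    have hfU : Stmt12.fH2 ∈ U := Submodule.mem_sup_right (Submodule.mem_span_singleton_self _)
    have h1 : (E + δ) Stmt12.BfH2 = ζ₀ * evalH2 Stmt12.fH2 ζ₀ + 1 := by
      rw [hadd, hδBf, hshift ζ₀ hζ₀]
    have h2 : (E + δ) Stmt12.fH2 = evalH2 Stmt12.fH2 ζ₀ := by
      rw [hadd, hδU _ hfU, add_zero]
    have h3 : (E + δ) Stmt12.e1H2 = ζ₀ := by
      rw [hadd, show Stmt12.e1H2 = lp.single 2 1 (1 : ℂ) from rfl, hSingle, hEvalSingle,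
        add_zero, pow_one, one_mul]
    rw [h1, h2, h3] at hM'
    exact one_ne_zero (by linear_combination hM')
  exact ⟨E + δ, hdisc, hKW, hPhi, hOne, hProd, hNotMult⟩
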